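/- arXiv:1109.4865 — 2 statements merged into one kernel-verified Lean document; each statement's English description precedes it below -/
import Mathlib

section
/- Let k ∈ (-1,1) and N > 1. For every continuous biconvex function f : ℝ² → ℝ (i.e. x ↦ f(x,y) and y ↦ f(x,y) are convex for each fixed value of the other variable), one has f(1,1) ≤ (1/(1-k)) ∫₁^N (f(kt,t) + f(t,kt)) t^{-2/(1-k)} (dt/t) + f(N,N) N^{-2/(1-k)}. -/
open MeasureTheory Topology Filter Set

/-- Lemma 9 (truncated form): for `k ∈ (-1,1)`, `N > 1` and any continuous biconvex
function `f : ℝ² → ℝ`,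
`f(1,1) ≤ (1/(1-k)) ∫₁^N (f(kt,t)+f(t,kt)) t^{-2/(1-k)} dt/t + f(N,N) N^{-2/(1-k)}`. -/
theorem stmt0 (k N : ℝ) (hk : k ∈ Set.Ioo (-1 : ℝ) 1) (hN : 1 < N)
    (f : ℝ → ℝ → ℝ)
    (hcont : Continuous fun p : ℝ × ℝ => f p.1 p.2)
    (hconv1 : ∀ y, ConvexOn ℝ Set.univ fun x => f x y)
    (hconv2 : ∀ x, ConvexOn ℝ Set.univ fun y => f x y) :
    f 1 1 ≤ (1 / (1 - k)) *
        (∫ t in (1:ℝ)..N, (f (k * t) t + f t (k * t)) * t ^ (-(2 / (1 - k))) / t)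
      + f N N * N ^ (-(2 / (1 - k))) := by
  obtain ⟨hk1, hk2⟩ := hk
  have h1k : (0:ℝ) < 1 - k := by linarith
  set α : ℝ := 2 / (1 - k) with hα
  have hαpos : 0 < α := by positivity
  set φ : ℝ → ℝ := fun t => (f (k * t) t + f t (k * t)) * t ^ (-α) / t with hφdef
  have hScont : Continuous fun t : ℝ => f (k * t) t + f t (k * t) := by
    apply Continuous.add
    · exact hcont.comp ((continuous_const.mul continuous_id).prodMk continuous_id)
    · exact hcont.comp (continuous_id.prodMk (continuous_const.mul continuous_id))
  have hGcont : Continuous fun t : ℝ => f t t :=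
    hcont.comp (continuous_id.prodMk continuous_id)
  have hφcont : ∀ x : ℝ, 0 < x → ContinuousAt φ x := by
    intro x hx
    apply ContinuousAt.div
    · exact hScont.continuousAt.mul
        ((Real.continuousAt_rpow_const x _ (Or.inl hx.ne')).comp continuousAt_id)
    · exact continuousAt_id
    · exact hx.ne'
  have hφint : ∀ x : ℝ, 1 ≤ x → IntervalIntegrable φ volume 1 x := by
    intro x hx
    apply ContinuousOn.intervalIntegrable
    intro t ht
    have ht0 : (0:ℝ) < t := by
      rcases Set.mem_uIcc.mp ht with h | h
      · linarith [h.1]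
      · linarith [h.1]
    exact (hφcont t ht0).continuousWithinAt
  set I : ℝ → ℝ := fun t => ∫ s in (1:ℝ)..t, φ s with hIdef
  have hIder : ∀ x : ℝ, 1 ≤ x → HasDerivAt I (φ x) x := by
    intro x hx
    have hx0 : (0:ℝ) < x := lt_of_lt_of_le one_pos hx
    refine intervalIntegral.integral_hasDerivAt_right (hφint x hx) ?_ (hφcont x hx0)
    exact ContinuousAt.stronglyMeasurableAtFilter isOpen_Ioi
      (fun y hy => hφcont y hy) x hx0
  set B : ℝ → ℝ := fun t => f t t * t ^ (-α) + (1 / (1 - k)) * I t with hBdef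
  have hpder : ∀ x : ℝ, 0 < x →
      HasDerivAt (fun t : ℝ => t ^ (-α)) (-α * x ^ (-α - 1)) x := by
    intro x hx
    exact Real.hasDerivAt_rpow_const (Or.inl hx.ne')
  have hBcont : ContinuousOn B (Set.Icc 1 N) := by
    intro x hx
    have hx0 : (0:ℝ) < x := lt_of_lt_of_le one_pos hx.1
    exact (ContinuousAt.add
      (hGcont.continuousAt.mul (hpder x hx0).continuousAt)
      (continuousAt_const.mul (hIder x hx.1).continuousAt)).continuousWithinAt
  have key : ∀ x ∈ Set.Icc (1:ℝ) N, -(B x) ≤ -(B 1) := by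
    apply image_le_of_liminf_slope_right_le_deriv_boundary
      (B := fun _ => -(B 1)) (B' := fun _ => 0) hBcont.neg le_rfl continuousOn_const
      (fun x _ => hasDerivWithinAt_const x _ _)
    intro x hx r hr
    have hx0 : (0:ℝ) < x := lt_of_lt_of_le one_pos hx.1
    have hkx : k * x < x := by nlinarith
    -- the comparison function
    set m : ℝ → ℝ := fun z =>
      (f x z - f (k * x) z + (f x x - f x (k * x))) / (x - k * x) with hmdef
    -- pointwise slope bound for z > x
    have hslope : ∀ z : ℝ, x < z →
        m z * z ^ (-α) + f x x * slope (fun t : ℝ => t ^ (-α)) x z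
          + (1 / (1 - k)) * slope I x z ≤ slope B x z := by
      intro z hz
      have hzx : (0:ℝ) < z - x := by linarith
      have hz0 : (0:ℝ) < z := by linarith
      have h1 : (f x z - f (k * x) z) / (x - k * x) ≤ (f z z - f x z) / (z - x) :=
        (hconv1 z).slope_mono_adjacent (Set.mem_univ _) (Set.mem_univ _) hkx hz
      have h2 : (f x x - f x (k * x)) / (x - k * x) ≤ (f x z - f x x) / (z - x) :=
        (hconv2 x).slope_mono_adjacent (Set.mem_univ _) (Set.mem_univ _) hkx hz
      have hm : m z ≤ (f z z - f x x) / (z - x) := by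
        rw [hmdef]
        calc (f x z - f (k * x) z + (f x x - f x (k * x))) / (x - k * x)
            = (f x z - f (k * x) z) / (x - k * x) + (f x x - f x (k * x)) / (x - k * x) := by
              rw [add_div]
          _ ≤ (f z z - f x z) / (z - x) + (f x z - f x x) / (z - x) := add_le_add h1 h2
          _ = (f z z - f x x) / (z - x) := by rw [← add_div]; ring_nf
      have hzpow : (0:ℝ) < z ^ (-α) := Real.rpow_pos_of_pos hz0 _
      have hid : slope B x z = (f z z - f x x) / (z - x) * z ^ (-α)
          + f x x * slope (fun t : ℝ => t ^ (-α)) x z + (1 / (1 - k)) * slope I x z := by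
        simp only [slope_def_field, hBdef]
        field_simp
        ring
      rw [hid]
      have := mul_le_mul_of_nonneg_right hm hzpow.le
      linarith
    -- limits
    have hmem : Set.Ioi x ∈ 𝓝[>] x := self_mem_nhdsWithin
    have hmcont : ContinuousAt m x := by
      apply ContinuousAt.div _ continuousAt_const (sub_pos.mpr hkx).ne'
      apply ContinuousAt.add _ continuousAt_const
      apply ContinuousAt.sub
      · exact (hcont.comp (continuous_const.prodMk continuous_id)).continuousAt
      · exact (hcont.comp (continuous_const.prodMk continuous_id)).continuousAt
    have hsub : 𝓝[>] x ≤ 𝓝[≠] x :=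
      nhdsWithin_mono x (fun z hz => ne_of_gt hz)
    have T1 : Filter.Tendsto (fun z => m z * z ^ (-α)) (𝓝[>] x)
        (𝓝 (m x * x ^ (-α))) := by
      apply Filter.Tendsto.mono_left _ nhdsWithin_le_nhds
      exact (hmcont.mul ((Real.continuousAt_rpow_const x _ (Or.inl hx0.ne')))).tendsto
    have T2 : Filter.Tendsto (fun z => f x x * slope (fun t : ℝ => t ^ (-α)) x z) (𝓝[>] x)
        (𝓝 (f x x * (-α * x ^ (-α - 1)))) := by
      exact (((hasDerivAt_iff_tendsto_slope).mp (hpder x hx0)).mono_left hsub).const_mul _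
    have T3 : Filter.Tendsto (fun z => (1 / (1 - k)) * slope I x z) (𝓝[>] x)
        (𝓝 ((1 / (1 - k)) * φ x)) := by
      exact (((hasDerivAt_iff_tendsto_slope).mp (hIder x hx.1)).mono_left hsub).const_mul _
    have hzero : m x * x ^ (-α) + f x x * (-α * x ^ (-α - 1)) + (1 / (1 - k)) * φ x = 0 := by
      have hx1 : x ^ (-α - 1) = x ^ (-α) / x := by
        rw [show -α - 1 = -α - 1 from rfl, Real.rpow_sub_one hx0.ne']
      rw [hmdef, hφdef, hx1, hα]
      have hne : x - k * x ≠ 0 := (sub_pos.mpr hkx).ne'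
      field_simp [hne, hx0.ne', h1k.ne']
      ring
    have Tsum : Filter.Tendsto (fun z => m z * z ^ (-α)
        + f x x * slope (fun t : ℝ => t ^ (-α)) x z + (1 / (1 - k)) * slope I x z)
        (𝓝[>] x) (𝓝 0) := by
      rw [← hzero]
      exact (T1.add T2).add T3
    have hev : ∀ᶠ z in 𝓝[>] x, slope (fun t => -(B t)) x z < r := by
      filter_upwards [hmem, Tsum.eventually (lt_mem_nhds (by linarith : -r < (0:ℝ)))]
        with z hz hlt
      have := hslope z hz
      have hBz : slope (fun t => -(B t)) x z = -(slope B x z) := by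
        simp [slope_def_field, neg_div, neg_sub]
        ring
      rw [hBz]
      linarith
    exact hev.frequently
  have hB1 : B 1 = f 1 1 := by
    simp [hBdef, hIdef, Real.one_rpow, intervalIntegral.integral_same]
  have hfinal := key N ⟨hN.le, le_refl N⟩
  have : B 1 ≤ B N := by linarith
  rw [hB1] at this
  calc f 1 1 ≤ B N := this
    _ = (1 / (1 - k)) * (∫ t in (1:ℝ)..N, (f (k * t) t + f t (k * t)) * t ^ (-α) / t)
        + f N N * N ^ (-α) := by rw [hBdef, hIdef]; ring
end

section
/- Let μ_N be the measure on ℝ² (identified with diagonal 2×2 matrices) defined by ∫ f dμ_N = (1/(1-k)) ∫₁^N [f(kt,t) + f(t,kt)] t^{-p} (dt/t) + f(N,N) N^{-p}, where 1 < p ≤ 2, k = 1 - 2/p, N > 1. Then μ_N is a probability measure with barycenter (1,1). -/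
/-- The measure `μ_N` defined by
`∫ f dμ_N = (1/(1-k)) ∫₁^N [f(kt,t)+f(t,kt)] t^{-p} dt/t + f(N,N) N^{-p}`
(with `1 < p ≤ 2`, `k = 1 - 2/p`, `N > 1`) is a probability measure with barycenter
`(1,1)`: its total mass is 1 and both coordinates of its barycenter equal 1. -/
theorem stmt18 (p k N : ℝ) (hp1 : 1 < p) (hp2 : p ≤ 2) (hk : k = 1 - 2 / p)
    (hN : 1 < N)
    (I : (ℝ → ℝ → ℝ) → ℝ)
    (hI : ∀ f : ℝ → ℝ → ℝ,
      I f = (1 / (1 - k)) * (∫ t in (1:ℝ)..N, (f (k * t) t + f t (k * t)) * t ^ (-p) / t)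
        + f N N * N ^ (-p)) :
    I (fun _ _ => 1) = 1 ∧ I (fun x _ => x) = 1 ∧ I (fun _ y => y) = 1 := by
  have hp0 : 0 < p := by linarith
  have hN0 : (0:ℝ) < N := by linarith
  have hmem : (0:ℝ) ∉ Set.uIcc (1:ℝ) N := by
    rw [Set.uIcc_of_le hN.le]
    intro h
    exact absurd h.1 (by norm_num)
  have key : ∀ a : ℝ, a ≠ -1 → (∫ t in (1:ℝ)..N, t ^ a) = (N ^ (a+1) - 1)/(a+1) := by
    intro a ha
    rw [integral_rpow (Or.inr ⟨ha, hmem⟩)]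
    simp
  -- part 1
  have i1 : (∫ t in (1:ℝ)..N, ((1:ℝ) + 1) * t ^ (-p) / t)
      = 2 * ((N ^ (-p) - 1) / (-p)) := by
    rw [show (∫ t in (1:ℝ)..N, ((1:ℝ) + 1) * t ^ (-p) / t)
        = ∫ t in (1:ℝ)..N, 2 * t ^ (-p - 1) from
      intervalIntegral.integral_congr (fun t ht => by
        rw [Set.uIcc_of_le hN.le] at ht
        have ht0 : (0:ℝ) < t := lt_of_lt_of_le one_pos ht.1
        rw [Real.rpow_sub ht0, Real.rpow_one]
        ring)]
    rw [intervalIntegral.integral_const_mul, key (-p - 1) (by intro h; linarith)]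
    norm_num
  -- part 2
  have i2 : (∫ t in (1:ℝ)..N, (k * t + t) * t ^ (-p) / t)
      = (k + 1) * ((N * N ^ (-p) - 1) / (-p + 1)) := by
    rw [show (∫ t in (1:ℝ)..N, (k * t + t) * t ^ (-p) / t)
        = ∫ t in (1:ℝ)..N, (k + 1) * t ^ (-p) from
      intervalIntegral.integral_congr (fun t ht => by
        rw [Set.uIcc_of_le hN.le] at ht
        have ht0 : (0:ℝ) < t := lt_of_lt_of_le one_pos ht.1
        field_simp)]
    rw [intervalIntegral.integral_const_mul, key (-p) (by intro h; linarith)]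
    rw [show N ^ (-p + 1) = N * N ^ (-p) by
      rw [Real.rpow_add hN0, Real.rpow_one]; ring]
  have h1k : 1 - k = 2 / p := by rw [hk]; ring
  have hp1' : p - 1 ≠ 0 := by intro h; linarith
  have hp0' : p ≠ 0 := ne_of_gt hp0
  refine ⟨?_, ?_, ?_⟩
  · rw [hI]
    rw [i1, h1k]
    field_simp
    ring
  · rw [hI]
    rw [i2, h1k, hk]
    have : -p + 1 ≠ 0 := by intro h; linarith
    field_simp
    ring
  · rw [hI]
    rw [show (∫ t in (1:ℝ)..N, (t + k * t) * t ^ (-p) / t)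
        = ∫ t in (1:ℝ)..N, (k * t + t) * t ^ (-p) / t from by
      congr 1; ext t; ring_nf]
    rw [i2, h1k, hk]
    have : -p + 1 ≠ 0 := by intro h; linarith
    field_simp
    ring
end
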